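/- The class of 1-Tinhofer graphs coincides with the class of refinable graphs, i.e., a graph G is 1-Tinhofer if and only if the stable partition of color refinement on G equals the orbit partition of Aut(G). -/

import Mathlib

open scoped Classical

noncomputable section

variable {V W : Type*}

/-- One step of color refinement: the new color of `v` encodes its old color together with
the multiset (as a sorted list) of old colors of its neighbours. -/
noncomputable def refineStep (G : SimpleGraph V) [Fintype V] (c : V → ℕ) : V → ℕ :=
  letI := Classical.decRel G.Adj
  fun v => Encodable.encode (c v, Multiset.sort (Multiset.map c (G.neighborFinset v).val) (· ≤ ·))

/-- `i` iterations of color refinement. -/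
noncomputable def refineIter (G : SimpleGraph V) [Fintype V] (c : V → ℕ) (i : ℕ) : V → ℕ :=
  (refineStep G)^[i] c

/-- The stable coloring obtained by running color refinement to stabilization
(after `|V|` rounds the induced partition is stable). -/
noncomputable def stab (G : SimpleGraph V) [Fintype V] (c : V → ℕ) : V → ℕ :=
  refineIter G c (Fintype.card V)

/-- Individualize the vertex `v`: it gets a fresh color. -/
noncomputable def indiv (c : V → ℕ) (v : V) : V → ℕ :=
  fun u => if u = v then 0 else c u + 1

/-- Individualize the set `S`: each of its vertices gets a fresh distinct color. -/
noncomputable def indivSet [Fintype V] (c : V → ℕ) (S : Set V) : V → ℕ :=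
  fun u => if u ∈ S then 2 * ((Fintype.equivFin V) u : ℕ) else 2 * c u + 1

/-- Isomorphism of vertex-colored graphs. -/
def IsoColored (G : SimpleGraph V) (H : SimpleGraph W) (c : V → ℕ) (d : W → ℕ) : Prop :=
  ∃ σ : V ≃ W, (∀ x y, G.Adj x y ↔ H.Adj (σ x) (σ y)) ∧ ∀ v, d (σ v) = c v

/-- Color-preserving automorphism of the vertex-colored graph `(G, c)`. -/
def IsAut (G : SimpleGraph V) (c : V → ℕ) (σ : V ≃ V) : Prop :=
  (∀ x y, G.Adj x y ↔ G.Adj (σ x) (σ y)) ∧ ∀ v, c (σ v) = c v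

/-- The coloring obtained from `c` by refining, then successively individualizing
the vertices in the list and re-refining after each individualization. -/
noncomputable def runIR (G : SimpleGraph V) [Fintype V] : (V → ℕ) → List V → (V → ℕ)
  | c, [] => stab G c
  | c, v :: l => runIR G (indiv (stab G c) v) l

/-- The two lists of individualized vertices are chosen, at each round, from the same
color class of the current stable colorings. -/
def ValidSeq (G : SimpleGraph V) (H : SimpleGraph W) [Fintype V] [Fintype W] :
    (V → ℕ) → (W → ℕ) → List V → List W → Prop
  | _, _, [], [] => True
  | c, d, u :: us, v :: vs =>
      stab G c u = stab H d v ∧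
      ValidSeq G H (indiv (stab G c) u) (indiv (stab H d) v) us vs
  | _, _, _, _ => False

/-- `G` is `k`-Tinhofer: for every isomorphic colored graph `H`, any `k` rounds of
individualization-and-refinement (with arbitrary valid choices of vertices)
yield isomorphic colored graphs. -/
def kTinhofer (k : ℕ) (G : SimpleGraph V) [Fintype V] (c : V → ℕ) : Prop :=
  ∀ (W' : Type) [Fintype W'] (H : SimpleGraph W') (d : W' → ℕ),
    IsoColored G H c d →
    ∀ (us : List V) (vs : List W'), us.length = k → vs.length = k →
      ValidSeq G H c d us vs → IsoColored G H (runIR G c us) (runIR H d vs)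

end


section Lemmas
variable {V W : Type*}

lemma refineStep_fst {G : SimpleGraph V} [Fintype V] {H : SimpleGraph W} [Fintype W]
    {c : V → ℕ} {d : W → ℕ} {x : V} {y : W}
    (h : refineStep G c x = refineStep H d y) : c x = d y := by
  unfold refineStep at h
  exact congrArg Prod.fst (Encodable.encode_injective h)

lemma refineIter_succ (G : SimpleGraph V) [Fintype V] (c : V → ℕ) (i : ℕ) :
    refineIter G c (i + 1) = refineStep G (refineIter G c i) := by
  simp [refineIter, Function.iterate_succ_apply']

lemma refineIter_fst {G : SimpleGraph V} [Fintype V] {H : SimpleGraph W} [Fintype W]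
    {c : V → ℕ} {d : W → ℕ} :
    ∀ (i : ℕ) {x : V} {y : W}, refineIter G c i x = refineIter H d i y → c x = d y := by
  intro i
  induction i with
  | zero => intro x y h; exact h
  | succ n ih =>
      intro x y h
      rw [refineIter_succ, refineIter_succ] at h
      exact ih (refineStep_fst h)

lemma stab_fst {G : SimpleGraph V} [Fintype V] {H : SimpleGraph W} [Fintype W]
    {c : V → ℕ} {d : W → ℕ} (hcard : Fintype.card W = Fintype.card V)
    {x : V} {y : W} (h : stab G c x = stab H d y) : c x = d y := by
  unfold stab at h
  rw [hcard] at h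
  exact refineIter_fst _ h

lemma nbrFinset_eq (G : SimpleGraph V) (H : SimpleGraph W) (σ : V ≃ W)
    (hadj : ∀ x y, G.Adj x y ↔ H.Adj (σ x) (σ y)) (v : V)
    [Fintype (H.neighborSet (σ v))] [Fintype (G.neighborSet v)] :
    H.neighborFinset (σ v) = (G.neighborFinset v).map σ.toEmbedding := by
  ext w
  simp only [SimpleGraph.mem_neighborFinset, Finset.mem_map, Equiv.coe_toEmbedding]
  constructor
  · intro h
    exact ⟨σ.symm w, by rw [hadj]; simpa using h, σ.apply_symm_apply w⟩
  · rintro ⟨a, ha, rfl⟩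
    exact (hadj v a).mp ha

lemma refineStep_nat (G : SimpleGraph V) [Fintype V] (H : SimpleGraph W) [Fintype W]
    (c : V → ℕ) (d : W → ℕ) (σ : V ≃ W)
    (hadj : ∀ x y, G.Adj x y ↔ H.Adj (σ x) (σ y)) (hc : ∀ v, d (σ v) = c v) (v : V) :
    refineStep H d (σ v) = refineStep G c v := by
  unfold refineStep
  rw [nbrFinset_eq G H σ hadj v, Finset.map_val, Multiset.map_map, hc v,
    show (d ∘ ⇑σ.toEmbedding) = c from funext fun x => hc x]

lemma refineIter_nat (G : SimpleGraph V) [Fintype V] (H : SimpleGraph W) [Fintype W]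
    (c : V → ℕ) (d : W → ℕ) (σ : V ≃ W)
    (hadj : ∀ x y, G.Adj x y ↔ H.Adj (σ x) (σ y)) (hc : ∀ v, d (σ v) = c v) :
    ∀ (i : ℕ) (v : V), refineIter H d i (σ v) = refineIter G c i v := by
  intro i
  induction i with
  | zero => exact hc
  | succ n ih =>
      intro v
      rw [refineIter_succ, refineIter_succ]
      exact refineStep_nat G H _ _ σ hadj ih v

lemma stab_nat (G : SimpleGraph V) [Fintype V] (H : SimpleGraph W) [Fintype W]
    (c : V → ℕ) (d : W → ℕ) (σ : V ≃ W)
    (hadj : ∀ x y, G.Adj x y ↔ H.Adj (σ x) (σ y)) (hc : ∀ v, d (σ v) = c v) (v : V) :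
    stab H d (σ v) = stab G c v := by
  unfold stab
  rw [show Fintype.card W = Fintype.card V from (Fintype.card_congr σ).symm]
  exact refineIter_nat G H c d σ hadj hc _ v

end Lemmas

theorem oneTinhofer_iff_refinable {V : Type} [Fintype V]
    (G : SimpleGraph V) (c : V → ℕ) :
    kTinhofer 1 G c ↔
      ∀ u v : V, (stab G c u = stab G c v ↔ ∃ σ : V ≃ V, IsAut G c σ ∧ σ u = v) := by
  constructor
  · intro hT u v
    constructor
    · intro h
      have hvalid : ValidSeq G G c c [u] [v] := ⟨h, trivial⟩
      have hiso := hT V G c ⟨Equiv.refl V, fun _ _ => Iff.rfl, fun _ => rfl⟩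
        [u] [v] rfl rfl hvalid
      simp only [runIR] at hiso
      obtain ⟨σ, hadj, hcol⟩ := hiso
      have hsu : σ u = v := by
        have h0 : indiv (stab G c) v (σ u) = indiv (stab G c) u u :=
          stab_fst rfl (hcol u)
        by_contra hne
        simp [indiv, hne] at h0
      refine ⟨σ, ⟨hadj, ?_⟩, hsu⟩
      intro x
      by_cases hx : x = u
      · subst hx
        rw [hsu]
        exact (stab_fst rfl h).symm
      · have h0 : indiv (stab G c) v (σ x) = indiv (stab G c) u x :=
          stab_fst rfl (hcol x)
        have hσx : σ x ≠ v := by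
          intro he
          exact hx (σ.injective (he.trans hsu.symm))
        simp only [indiv, if_neg hσx, if_neg hx, Nat.add_right_cancel_iff] at h0
        exact stab_fst rfl h0
    · rintro ⟨σ, ⟨hadj, hc⟩, rfl⟩
      exact (stab_nat G G c c σ hadj hc u).symm
  · intro hRef W' _ H d hiso us vs hus hvs hvalid
    obtain ⟨u, rfl⟩ := List.length_eq_one_iff.mp hus
    obtain ⟨v, rfl⟩ := List.length_eq_one_iff.mp hvs
    obtain ⟨σ, hadj, hcol⟩ := hiso
    obtain ⟨h1, -⟩ := hvalid
    have hstabnat : ∀ x, stab H d (σ x) = stab G c x :=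
      stab_nat G H c d σ hadj hcol
    have h2 : stab G c u = stab G c (σ.symm v) := by
      rw [← hstabnat (σ.symm v), σ.apply_symm_apply]; exact h1
    obtain ⟨τ, ⟨hτadj, hτc⟩, hτu⟩ := (hRef u (σ.symm v)).mp h2
    set ρ : V ≃ W' := τ.trans σ with hρ
    have hρu : ρ u = v := by
      simp [hρ, Equiv.trans_apply, hτu]
    have hρadj : ∀ x y, G.Adj x y ↔ H.Adj (ρ x) (ρ y) := fun x y =>
      (hτadj x y).trans (hadj (τ x) (τ y))
    have hτstab : ∀ x, stab G c (τ x) = stab G c x :=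
      stab_nat G G c c τ hτadj hτc
    have hρcol : ∀ x, indiv (stab H d) v (ρ x) = indiv (stab G c) u x := by
      intro x
      by_cases hx : x = u
      · subst hx
        simp [indiv, hρu]
      · have hρx : ρ x ≠ v := fun he => hx (ρ.injective (he.trans hρu.symm))
        simp only [indiv, if_neg hρx, if_neg hx, Nat.add_right_cancel_iff]
        rw [show ρ x = σ (τ x) from rfl, hstabnat (τ x), hτstab x]
      
    simp only [runIR]
    exact ⟨ρ, hρadj, stab_nat G H _ _ ρ hρadj hρcol⟩
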